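/- If argument a gen-rebuts argument b in a Deductive ASPIC⊖ argumentation system, then there exists an argument a′ of the form a′ : a → ¬⋀ ADSub(b)^C, i.e., ¬⋀Γ ⊨_C ¬⋀ ADSub(b)^C where a^C = ¬⋀Γ for some Γ ⊆ Sub(b)^C. -/

import Mathlib

namespace ASPIC

/-- An underlying logical language: formulas, atoms, interpretations, a classical
negation and conjunction, and the interpolation-style assumption on syntactically
disjoint sets of formulas. -/
structure Logic where
  F : Type
  Atom : Type
  atoms : F → Set Atom
  I : Type
  inhab : Nonempty I
  Models : I → F → Prop
  neg : F → F
  conj : F → F → F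
  neg_spec : ∀ i φ, Models i (neg φ) ↔ ¬ Models i φ
  conj_spec : ∀ i φ ψ, Models i (conj φ ψ) ↔ (Models i φ ∧ Models i ψ)
  atoms_neg : ∀ φ, atoms (neg φ) = atoms φ
  atoms_conj : ∀ φ ψ, atoms (conj φ ψ) = atoms φ ∪ atoms ψ
  interp : ∀ Γ Δ : Set F, (∀ φ ∈ Γ, ∀ ψ ∈ Δ, atoms φ ∩ atoms ψ = ∅) →
    (∃ i, ∀ φ ∈ Γ, Models i φ) → (∃ i, ∀ ψ ∈ Δ, Models i ψ) →
    (∃ i, (∀ φ ∈ Γ, Models i φ) ∧ (∀ ψ ∈ Δ, Models i ψ))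

/-- The model-based consequence relation ⊨_C. -/
def Conseq (L : Logic) (Γ : Set L.F) (φ : L.F) : Prop :=
  ∀ i, (∀ ψ ∈ Γ, L.Models i ψ) → L.Models i φ

/-- φ = −ψ: one formula is the negation of the other. -/
def negOf (L : Logic) (φ ψ : L.F) : Prop := φ = L.neg ψ ∨ ψ = L.neg φ

/-- Conjunction of a nonempty list of formulas: conjL L φ [ψ₁,…] = φ ∧ ψ₁ ∧ … . -/
def conjL (L : Logic) : L.F → List L.F → L.F
  | φ, [] => φ
  | φ, ψ :: l => L.conj φ (conjL L ψ l)

/-- A (defeasible) rule: antecedents and conclusion. -/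
abbrev Rule (L : Logic) := List L.F × L.F

/-- An argumentation system of Deductive ASPIC⊖: satisfiable axioms, defeasible rules,
a (partial) naming function and a total preorder on defeasible rules.  The strict rules
are the axiomatic rules together with all consequence-based rules. -/
structure ASys (L : Logic) where
  AX : Set L.F
  AX_sat : ∃ i, ∀ φ ∈ AX, L.Models i φ
  Rd : Set (Rule L)
  name : Rule L → Option L.F
  rpref : Rule L → Rule L → Prop
  rpref_refl : ∀ r, rpref r r
  rpref_trans : ∀ r s t, rpref r s → rpref s t → rpref r t
  rpref_total : ∀ r s, rpref r s ∨ rpref s r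

/-- Top-rule kinds: axiomatic, consequence-based strict, defeasible. -/
inductive RK : Type
  | ax | cb | df
deriving DecidableEq

/-- Argument trees (with the kind of the top rule and the conclusion recorded). -/
inductive Arg (L : Logic) : Type
  | node (k : RK) (subs : List (Arg L)) (concl : L.F)

def Arg.concl {L : Logic} : Arg L → L.F
  | .node _ _ φ => φ

def Arg.subs {L : Logic} : Arg L → List (Arg L)
  | .node _ s _ => s

def Arg.kind {L : Logic} : Arg L → RK
  | .node k _ _ => k

/-- Well-formed arguments of an argumentation system. -/
inductive Wf (L : Logic) (as : ASys L) : Arg L → Prop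
  | ax (φ : L.F) (h : φ ∈ as.AX) : Wf L as (.node .ax [] φ)
  | cb (subs : List (Arg L)) (φ : L.F) (hs : ∀ a ∈ subs, Wf L as a)
      (h : Conseq L {ψ | ∃ a ∈ subs, Arg.concl a = ψ} φ) : Wf L as (.node .cb subs φ)
  | df (subs : List (Arg L)) (φ : L.F) (hs : ∀ a ∈ subs, Wf L as a)
      (h : (subs.map Arg.concl, φ) ∈ as.Rd) : Wf L as (.node .df subs φ)

/-- Sub-argument relation: `Sub a b` means a is a sub-argument of b. -/
inductive Sub (L : Logic) : Arg L → Arg L → Prop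
  | refl (a : Arg L) : Sub L a a
  | step (a b : Arg L) (k : RK) (subs : List (Arg L)) (φ : L.F)
      (hb : b ∈ subs) (h : Sub L a b) : Sub L a (.node k subs φ)

/-- Conclusions of the sub-arguments of a. -/
def SubC (L : Logic) (a : Arg L) : Set L.F := {φ | ∃ b, Sub L b a ∧ Arg.concl b = φ}

/-- Axiomatic and defeasible sub-arguments. -/
def ADSub (L : Logic) (a : Arg L) : Set (Arg L) := {b | Sub L b a ∧ Arg.kind b ≠ RK.cb}

/-- Conclusions of the axiomatic and defeasible sub-arguments. -/
def ADSubC (L : Logic) (a : Arg L) : Set L.F :=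
  {φ | ∃ b, Sub L b a ∧ Arg.kind b ≠ RK.cb ∧ Arg.concl b = φ}

/-- Defeasible rules used in an argument. -/
def DR (L : Logic) (a : Arg L) : Set (Rule L) :=
  {r | ∃ subs, Sub L (Arg.node RK.df subs r.2) a ∧ r.1 = subs.map Arg.concl}

/-- Strict arguments: no defeasible rules used. -/
def IsStrictArg (L : Logic) (a : Arg L) : Prop := DR L a = ∅

/-- Elitist weakest-link lifting of the rule preorder to arguments (a ⪯_ewl b). -/
def ewl (L : Logic) (as : ASys L) (a b : Arg L) : Prop :=
  (DR L a = ∅ ∧ DR L b = ∅) ∨ ∃ ra ∈ DR L a, ∀ rb ∈ DR L b, as.rpref ra rb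

/-- a undercuts b: the conclusion of a is the negation of the name of a defeasible rule
used in b. -/
def Undercuts (L : Logic) (as : ASys L) (a b : Arg L) : Prop :=
  ∃ subs φ, Sub L (Arg.node RK.df subs φ) b ∧
    ∃ nm, as.name (subs.map Arg.concl, φ) = some nm ∧ negOf L (Arg.concl a) nm

/-- a gen-rebuts b: b is defeasible and the conclusion of a is the negation of a conjunction
of conclusions of sub-arguments of b. -/
def GenRebuts (L : Logic) (a b : Arg L) : Prop :=
  DR L b ≠ ∅ ∧ ∃ (φ : L.F) (l : List L.F),
    (∀ χ ∈ φ :: l, χ ∈ SubC L b) ∧ Arg.concl a = L.neg (conjL L φ l)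

/-- a defeats b: a undercuts b, or a gen-rebuts b and a is not strictly weaker than b. -/
def Defeats (L : Logic) (as : ASys L) (a b : Arg L) : Prop :=
  Undercuts L as a b ∨
    (GenRebuts L a b ∧ ¬ (ewl L as a b ∧ ¬ ewl L as b a))

/-- The strict rules of an argumentation system: axiomatic or consequence-based. -/
def StrictRule (L : Logic) (as : ASys L) (r : Rule L) : Prop :=
  (r.1 = [] ∧ r.2 ∈ as.AX) ∨ Conseq L {φ | φ ∈ r.1} r.2


/-- List of all sub-arguments of an argument. -/
def subList {L : Logic} : Arg L → List (Arg L)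
  | .node k s φ => .node k s φ :: (s.attach.map (fun x => subList x.1)).flatten
  decreasing_by
    have := List.sizeOf_lt_of_mem x.2
    simp only [Arg.node.sizeOf_spec]
    omega

lemma sub_mem_subList {L : Logic} {b c : Arg L} (h : Sub L c b) : c ∈ subList b := by
  induction h with
  | refl =>
    cases c with
    | node k s φ => rw [subList]; exact List.mem_cons_self
  | step x k subs φ hx hs ih =>
    rw [subList]
    refine List.mem_cons_of_mem _ (List.mem_flatten.2 ⟨subList x, ?_, ih⟩)
    exact List.mem_map.2 ⟨⟨x, hx⟩, List.mem_attach _ _, rfl⟩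

lemma mem_subList_sub {L : Logic} : ∀ (b c : Arg L), c ∈ subList b → Sub L c b
  | .node k s φ, c, h => by
    rw [subList] at h
    rcases List.mem_cons.1 h with rfl | h2
    · exact Sub.refl _
    · simp only [List.mem_flatten, List.mem_map, List.mem_attach, true_and] at h2
      obtain ⟨_, ⟨⟨x, hx⟩, rfl⟩, hc⟩ := h2
      exact Sub.step _ _ _ _ _ hx (mem_subList_sub x c hc)
  termination_by b => sizeOf b
  decreasing_by
    have := List.sizeOf_lt_of_mem hx
    simp only [Arg.node.sizeOf_spec]
    omega

lemma mem_subList {L : Logic} (b c : Arg L) : c ∈ subList b ↔ Sub L c b :=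
  ⟨mem_subList_sub b c, sub_mem_subList⟩

/-- List of conclusions of axiomatic/defeasible sub-arguments. -/
def adList {L : Logic} (b : Arg L) : List L.F :=
  ((subList b).filter (fun c => decide (Arg.kind c ≠ RK.cb))).map Arg.concl

lemma mem_adList {L : Logic} (b : Arg L) (χ : L.F) :
    χ ∈ adList b ↔ χ ∈ ADSubC L b := by
  simp only [adList, List.mem_map, List.mem_filter, mem_subList, decide_eq_true_eq,
    ADSubC, Set.mem_setOf_eq]
  constructor
  · rintro ⟨c, ⟨h1, h2⟩, h3⟩; exact ⟨c, h1, h2, h3⟩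
  · rintro ⟨c, h1, h2, h3⟩; exact ⟨c, ⟨h1, h2⟩, h3⟩

lemma models_of_AD {L : Logic} {as : ASys L} {b : Arg L} (hb : Wf L as b) :
    ∀ i, (∀ φ ∈ ADSubC L b, L.Models i φ) → ∀ c, Sub L c b → L.Models i (Arg.concl c) := by
  induction hb with
  | ax φ h =>
    intro i hi c hc
    cases hc with
    | refl => exact hi _ ⟨_, Sub.refl _, by simp [Arg.kind], rfl⟩
    | step x =>
      rename_i _ hx
      exact absurd hx List.not_mem_nil
  | cb subs φ hs hcon ih =>
    intro i hi c hc
    have hsubAD : ∀ s ∈ subs, ∀ χ ∈ ADSubC L s, L.Models i χ := by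
      rintro s hsmem χ ⟨x, hx1, hx2, hx3⟩
      exact hi χ ⟨x, Sub.step _ _ _ _ _ hsmem hx1, hx2, hx3⟩
    cases hc with
    | refl =>
      apply hcon i
      rintro ψ ⟨s, hsmem, rfl⟩
      exact ih s hsmem i (hsubAD s hsmem) s (Sub.refl s)
    | step x =>
      rename_i hsub hx
      exact ih x hx i (hsubAD x hx) c hsub
  | df subs φ hs hr ih =>
    intro i hi c hc
    have hsubAD : ∀ s ∈ subs, ∀ χ ∈ ADSubC L s, L.Models i χ := by
      rintro s hsmem χ ⟨x, hx1, hx2, hx3⟩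
      exact hi χ ⟨x, Sub.step _ _ _ _ _ hsmem hx1, hx2, hx3⟩
    cases hc with
    | refl => exact hi _ ⟨_, Sub.refl _, by simp [Arg.kind], rfl⟩
    | step x =>
      rename_i hsub hx
      exact ih x hx i (hsubAD x hx) c hsub

lemma conjL_iff (L : Logic) (i : L.I) :
    ∀ (l : List L.F) (φ : L.F), L.Models i (conjL L φ l) ↔ ∀ χ ∈ φ :: l, L.Models i χ
  | [], φ => by simp [conjL]
  | ψ :: l, φ => by
    simp only [conjL, L.conj_spec, conjL_iff L i l ψ, List.mem_cons]
    constructor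
    · rintro ⟨h1, h2⟩ χ (rfl | h)
      · exact h1
      · exact h2 χ h
    · intro h
      exact ⟨h φ (Or.inl rfl), fun χ hχ => h χ (Or.inr hχ)⟩

end ASPIC

open ASPIC in
/-- If a gen-rebuts b, then there exists an argument a′ : a → ¬⋀ ADSub(b)^C,
i.e. the conjunction of the conclusions of the axiomatic and defeasible sub-arguments of b can
be listed as φ :: l with ¬(conjL φ l) a consequence of the conclusion of a, so that the
one-step strict argument with sub-argument a and that conclusion is well formed. -/
theorem one_step_attacker_exists (L : Logic) (as : ASys L)
    (a b : Arg L) (ha : Wf L as a) (hb : Wf L as b)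
    (hgr : GenRebuts L a b) :
    ∃ (φ : L.F) (l : List L.F),
      {χ | χ ∈ φ :: l} = ADSubC L b ∧
      Conseq L {Arg.concl a} (L.neg (conjL L φ l)) ∧
      Wf L as (Arg.node RK.cb [a] (L.neg (conjL L φ l))) := by
  obtain ⟨hdr, φ0, l0, hΓ, hconc⟩ := hgr
  -- the list of AD conclusions is nonempty
  have hne : adList b ≠ [] := by
    obtain ⟨r, hr⟩ := Set.nonempty_iff_ne_empty.2 hdr
    obtain ⟨subs, hsub, -⟩ := hr
    intro hnil
    have : Arg.concl (Arg.node RK.df subs r.2) ∈ adList b :=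
      (mem_adList b _).2 ⟨_, hsub, by simp [Arg.kind], rfl⟩
    simp [hnil] at this
  obtain ⟨φ, l, heq⟩ : ∃ φ l, adList b = φ :: l := by
    cases h : adList b with
    | nil => exact absurd h hne
    | cons x xs => exact ⟨x, xs, rfl⟩
  refine ⟨φ, l, ?_, ?_, ?_⟩
  · ext χ
    simp only [Set.mem_setOf_eq, ← heq, mem_adList]
  · intro i hi
    have hia : L.Models i (Arg.concl a) := hi _ rfl
    rw [hconc, L.neg_spec] at hia
    rw [L.neg_spec]
    intro hcon
    apply hia
    rw [conjL_iff]
    have hAD : ∀ χ ∈ ADSubC L b, L.Models i χ := by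
      intro χ hχ
      have : χ ∈ φ :: l := by rw [← heq] at *; exact (mem_adList b χ).2 hχ
      exact (conjL_iff L i l φ).1 hcon χ this
    intro χ hχ
    obtain ⟨c, hc, rfl⟩ := hΓ χ hχ
    exact models_of_AD hb i hAD c hc
  · refine Wf.cb [a] _ ?_ ?_
    · intro x hx
      simp only [List.mem_singleton] at hx
      subst hx; exact ha
    · intro i hi
      have hia : L.Models i (Arg.concl a) := by
        apply hi
        exact ⟨a, List.mem_singleton_self a, rfl⟩
      rw [hconc, L.neg_spec] at hia
      rw [L.neg_spec]
      intro hcon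
      apply hia
      rw [conjL_iff]
      have hAD : ∀ χ ∈ ADSubC L b, L.Models i χ := by
        intro χ hχ
        have : χ ∈ φ :: l := by rw [← heq] at *; exact (mem_adList b χ).2 hχ
        exact (conjL_iff L i l φ).1 hcon χ this
      intro χ hχ
      obtain ⟨c, hc, rfl⟩ := hΓ χ hχ
      exact models_of_AD hb i hAD c hc
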